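/- Let G be a linearly ordered commutative group, X a set, k ≥ 2, and f₁, …, f_k : X → G (the monomial functions of a supertropical polynomial, repeated entries representing ghost monomials). Define f̂(x) := max over i of ( f_i(x) · ( max over j ≠ i of f_j(x) )⁻¹ ). Then for every x ∈ X, f̂(x) = 1 if and only if x is a corner root of the family f₁, …, f_k, i.e. there exist indices i ≠ j with f_i(x) = f_j(x) and f_l(x) ≤ f_i(x) for all l. -/

import Mathlib

/-- For a finite family of at least two functions `f i : X → G` (the monomials of a
supertropical polynomial), the rational function
`f̂(x) = ⊔ᵢ ( fᵢ(x) · (⊔_{j ≠ i} fⱼ(x))⁻¹ )` takes the value `1` at `x` iff `x` is a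
corner root of the family: there are `i ≠ j` with `fᵢ(x) = fⱼ(x)` dominating all `fₗ(x)`. -/
theorem hat_eq_one_iff_corner_root {G X : Type*} [CommGroup G] [LinearOrder G] [IsOrderedMonoid G]
    {ι : Type*} [Fintype ι] [DecidableEq ι] (hcard : 2 ≤ Fintype.card ι)
    (f : ι → X → G) (x : X) :
    (Finset.univ.sup'
        (Finset.card_pos.mp (by rw [Finset.card_univ]; omega))
        (fun i => f i x *
          ((Finset.univ.erase i).sup'
            (Finset.card_pos.mp (by
              rw [Finset.card_erase_of_mem (Finset.mem_univ i), Finset.card_univ]; omega))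
            (fun j => f j x))⁻¹)) = 1
      ↔ ∃ i j : ι, i ≠ j ∧ f i x = f j x ∧ ∀ l : ι, f l x ≤ f i x := by
  have hne : (Finset.univ : Finset ι).Nonempty :=
    Finset.card_pos.mp (by rw [Finset.card_univ]; omega)
  have hne' : ∀ i : ι, ((Finset.univ : Finset ι).erase i).Nonempty := fun i =>
    Finset.card_pos.mp (by
      rw [Finset.card_erase_of_mem (Finset.mem_univ i), Finset.card_univ]; omega)
  set g : ι → G := fun i => f i x with hg
  set M : ι → G := fun i => (Finset.univ.erase i).sup' (hne' i) g with hM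
  set F : ι → G := fun i => g i * (M i)⁻¹ with hF
  show Finset.univ.sup' hne F = 1 ↔ _
  constructor
  · intro h
    obtain ⟨i0, _, hi0⟩ := Finset.exists_mem_eq_sup' hne g
    have hmax : ∀ l : ι, g l ≤ g i0 := fun l => hi0 ▸ Finset.le_sup' g (Finset.mem_univ l)
    have hterm : F i0 ≤ 1 := h ▸ Finset.le_sup' F (Finset.mem_univ i0)
    have hle : g i0 ≤ M i0 := by
      calc g i0 = F i0 * M i0 := by rw [hF]; group
        _ ≤ 1 * M i0 := mul_le_mul_left hterm _
        _ = M i0 := one_mul _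
    obtain ⟨j, hj, hjeq⟩ := Finset.exists_mem_eq_sup' (hne' i0) g
    have hji : j ≠ i0 := (Finset.mem_erase.mp hj).1
    exact ⟨i0, j, hji.symm, le_antisymm (le_trans hle hjeq.le) (hmax j), hmax⟩
  · rintro ⟨i, j, hij, heq, hmax⟩
    have heq' : g i = g j := heq
    have hmax' : ∀ l, g l ≤ g i := hmax
    apply le_antisymm
    · apply Finset.sup'_le
      intro l _
      have hMl : g i ≤ M l := by
        rcases eq_or_ne l i with rfl | hli
        · have hmem : j ∈ Finset.univ.erase l := Finset.mem_erase.mpr ⟨hij.symm, Finset.mem_univ j⟩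
          exact heq'.le.trans (Finset.le_sup' g hmem)
        · have hmem : i ∈ Finset.univ.erase l := Finset.mem_erase.mpr ⟨hli.symm, Finset.mem_univ i⟩
          exact Finset.le_sup' g hmem
      have hgl : g l ≤ M l := le_trans (hmax' l) hMl
      calc F l = g l * (M l)⁻¹ := rfl
        _ ≤ M l * (M l)⁻¹ := mul_le_mul_left hgl _
        _ = 1 := mul_inv_cancel _
    · have hMi : M i = g i := by
        apply le_antisymm
        · exact Finset.sup'_le _ _ fun l _ => hmax' l
        · have hmem : j ∈ Finset.univ.erase i := Finset.mem_erase.mpr ⟨hij.symm, Finset.mem_univ j⟩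
          exact heq'.le.trans (Finset.le_sup' g hmem)
      have hFi : F i = 1 := by rw [hF]; simp only; rw [hMi, mul_inv_cancel]
      exact hFi ▸ Finset.le_sup' F (Finset.mem_univ i)
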